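/- For all integers n > k ≥ 2, the poset Poset(PF_{n,k}) is order-isomorphic to the direct product of Poset(PF_{n-1,k}) with a two-element chain. -/

import Mathlib

/-- A parking function of length `n`. -/
def IsParkingFunction (n : ℕ) (f : Fin n → ℕ) : Prop :=
  (∀ i, 1 ≤ f i) ∧
  ∀ i : Fin n, (i : ℕ) + 1 ≤ (Finset.univ.filter fun j => f j ≤ (i : ℕ) + 1).card

/-- `f ∈ PF_{n,k}`: a parking function of length `n` in which the value `k` does not
occur but each of the values `k+1,…,n` does occur. -/
def IsPFnk (n k : ℕ) (f : Fin n → ℕ) : Prop :=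
  IsParkingFunction n f ∧ (∀ i, f i ≠ k) ∧ ∀ m, k < m → m ≤ n → ∃ i, f i = m

/-- Noncrossing partitions of `{1,…,m}`, encoded as setoids (equivalence relations) on `ℕ`
whose nontrivial classes are contained in `[1,m]`, ordered by refinement (σ ≤ τ iff every
block of σ is contained in a block of τ), and satisfying the noncrossing condition: there
are no `a < b < c < d` with `a,c` in one block and `b,d` in a different block. -/
def NCPart (m : ℕ) : Type :=
  {π : Setoid ℕ //
    (∀ a b : ℕ, π.r a b → a ≠ b → 1 ≤ a ∧ a ≤ m ∧ 1 ≤ b ∧ b ≤ m) ∧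
    ∀ a b c d : ℕ, a < b → b < c → c < d → π.r a c → π.r b d → π.r a b}

instance (m : ℕ) : PartialOrder (NCPart m) := by unfold NCPart; infer_instance

/-- `B` is a block (equivalence class) of `π`. -/
def IsBlock {m : ℕ} (π : NCPart m) (B : Set ℕ) : Prop :=
  ∃ a, B = {b | π.1.r a b}

/-- The minimum element `0̂` of `NC_m`: all blocks are singletons. -/
def ncBot (m : ℕ) : NCPart m :=
  ⟨⟨(· = ·), eq_equivalence⟩,
    fun _ _ hab hne => absurd hab hne,
    fun a b c d hab hbc hcd hac _ => by
      have h : a = c := hac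
      omega⟩

/-- The maximum element `1̂` of `NC_m`: one block `{1,…,m}`. -/
def ncTop (m : ℕ) : NCPart m :=
  ⟨⟨fun a b => a = b ∨ (1 ≤ a ∧ a ≤ m ∧ 1 ≤ b ∧ b ≤ m),
    ⟨fun _ => Or.inl rfl,
     fun {a b} h => by omega,
     fun {a b c} h1 h2 => by omega⟩⟩,
    fun a b hab hne => by dsimp only at hab; omega,
    fun a b c d h1 h2 h3 hac hbd => by dsimp only at hac hbd ⊢; omega⟩

/-- `l` is the Stanley label of the covering relation `σ ⋖ τ` in `NC_m`:
`τ` is obtained from `σ` by merging exactly two blocks `B₁, B₂` (all other blocks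
unchanged), where `B₁` contains the minimum of the merged block, and `l` is the
largest element of `B₁` that is smaller than every element of `B₂`. -/
def CoverLabel {m : ℕ} (σ τ : NCPart m) (l : ℕ) : Prop :=
  ∃ B₁ B₂ : Set ℕ, IsBlock σ B₁ ∧ IsBlock σ B₂ ∧ B₁ ≠ B₂ ∧
    (∀ a b, τ.1.r a b ↔ (σ.1.r a b ∨ (a ∈ B₁ ∪ B₂ ∧ b ∈ B₁ ∪ B₂))) ∧
    (∃ a ∈ B₁, ∀ x ∈ B₁ ∪ B₂, a ≤ x) ∧
    l ∈ B₁ ∧ (∀ y ∈ B₂, l < y) ∧ ∀ x ∈ B₁, (∀ y ∈ B₂, x < y) → x ≤ l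

/-- `c 0 ⋖ c 1 ⋖ ⋯ ⋖ c n` is a maximal chain of `NC_{n+1}` (from `0̂` to `1̂`) whose
Stanley label sequence `ℓ 0, …, ℓ (n-1)` is a parking function lying in `PF_{n,k}`. -/
def IsPFChain (n k : ℕ) (c : ℕ → NCPart (n + 1)) (ℓ : ℕ → ℕ) : Prop :=
  c 0 = ncBot (n + 1) ∧ c n = ncTop (n + 1) ∧
  (∀ i < n, CoverLabel (c i) (c (i + 1)) (ℓ i)) ∧
  IsPFnk n k (fun i : Fin n => ℓ (i : ℕ))

/-- `π` lies on some maximal chain of `NC_{n+1}` whose label sequence is in `PF_{n,k}`,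
i.e. `π` is an element of `Poset(PF_{n,k})`. -/
def InPosetPF (n k : ℕ) (π : NCPart (n + 1)) : Prop :=
  ∃ c ℓ, IsPFChain n k c ℓ ∧ ∃ i ≤ n, c i = π

/-- `σ ⋖ τ` is a covering relation occurring on some maximal chain of `NC_{n+1}`
whose label sequence is in `PF_{n,k}`. -/
def PFCover (n k : ℕ) (σ τ : NCPart (n + 1)) : Prop :=
  ∃ c ℓ, IsPFChain n k c ℓ ∧ ∃ i < n, c i = σ ∧ c (i + 1) = τ

/-- The poset `Poset(PF_{n,k})`: its elements are the noncrossing partitions appearing on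
some maximal chain of `NC_{n+1}` whose label sequence lies in `PF_{n,k}`, with order
generated by the covering relations occurring on such chains. -/
def PFPoset (n k : ℕ) : Type := {π : NCPart (n + 1) // InPosetPF n k π}

instance (n k : ℕ) : LE (PFPoset n k) :=
  ⟨fun σ τ => Relation.ReflTransGen (PFCover n k) σ.1 τ.1⟩

instance (n k : ℕ) : LT (PFPoset n k) :=
  ⟨fun σ τ => σ ≤ τ ∧ ¬τ ≤ σ⟩

section AuxBasic

variable {m : ℕ}

lemma NC.refl (π : NCPart m) (a : ℕ) : π.1.r a a := π.1.iseqv.refl a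
lemma NC.symm (π : NCPart m) {a b : ℕ} (h : π.1.r a b) : π.1.r b a := π.1.iseqv.symm h
lemma NC.trans (π : NCPart m) {a b c : ℕ} (h : π.1.r a b) (h' : π.1.r b c) : π.1.r a c :=
  π.1.iseqv.trans h h'

lemma block_rel {π : NCPart m} {B : Set ℕ} (hB : IsBlock π B) {x y : ℕ}
    (hx : x ∈ B) (hy : y ∈ B) : π.1.r x y := by
  obtain ⟨a, rfl⟩ := hB
  exact π.1.iseqv.trans (π.1.iseqv.symm hx) hy

lemma block_closed {π : NCPart m} {B : Set ℕ} (hB : IsBlock π B) {x y : ℕ}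
    (hx : x ∈ B) (hr : π.1.r x y) : y ∈ B := by
  obtain ⟨a, rfl⟩ := hB
  exact π.1.iseqv.trans hx hr

lemma blocks_eq {π : NCPart m} {B C : Set ℕ} (hB : IsBlock π B) (hC : IsBlock π C)
    {x : ℕ} (hxB : x ∈ B) (hxC : x ∈ C) : B = C := by
  obtain ⟨a, rfl⟩ := hB
  obtain ⟨b, rfl⟩ := hC
  ext y
  constructor
  · intro hy
    exact π.1.iseqv.trans hxC (π.1.iseqv.trans (π.1.iseqv.symm hxB) hy)
  · intro hy
    exact π.1.iseqv.trans hxB (π.1.iseqv.trans (π.1.iseqv.symm hxC) hy)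

lemma isBlock_class (π : NCPart m) (a : ℕ) : IsBlock π {b | π.1.r a b} := ⟨a, rfl⟩

lemma mem_own_class (π : NCPart m) (a : ℕ) : a ∈ {b | π.1.r a b} := π.1.iseqv.refl a

/-- From a cover, destructured facts. -/
lemma cover_mono {σ τ : NCPart m} {l : ℕ} (h : CoverLabel σ τ l) {a b : ℕ}
    (hab : σ.1.r a b) : τ.1.r a b := by
  obtain ⟨B₁, B₂, _, _, _, hiff, _⟩ := h
  exact (hiff a b).2 (Or.inl hab)

end AuxBasic
section AuxCover

variable {m : ℕ}

lemma blocks_disj {π : NCPart m} {B C : Set ℕ} (hB : IsBlock π B) (hC : IsBlock π C)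
    (hne : B ≠ C) : ∀ x, x ∈ B → x ∉ C := by
  intro x hxB hxC
  exact hne (blocks_eq hB hC hxB hxC)

lemma block_ne {π : NCPart m} (a : ℕ) : ∃ x, x ∈ {b | π.1.r a b} := ⟨a, π.1.iseqv.refl a⟩

lemma cover_elt_bound {σ τ : NCPart m} {B₁ B₂ : Set ℕ}
    (hB₁ : IsBlock σ B₁) (hB₂ : IsBlock σ B₂) (hne : B₁ ≠ B₂)
    (hiff : ∀ a b, τ.1.r a b ↔ (σ.1.r a b ∨ (a ∈ B₁ ∪ B₂ ∧ b ∈ B₁ ∪ B₂)))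
    {x : ℕ} (hx : x ∈ B₁ ∪ B₂) : 1 ≤ x ∧ x ≤ m := by
  obtain ⟨a₁, hBa₁⟩ := hB₁
  obtain ⟨a₂, hBa₂⟩ := hB₂
  have h₁ : a₁ ∈ B₁ := by rw [hBa₁]; exact σ.1.iseqv.refl a₁
  have h₂ : a₂ ∈ B₂ := by rw [hBa₂]; exact σ.1.iseqv.refl a₂
  rcases hx with hx | hx
  · have hxy : x ≠ a₂ := fun h => blocks_disj ⟨a₁, hBa₁⟩ ⟨a₂, hBa₂⟩ hne x hx (h ▸ h₂)
    have : τ.1.r x a₂ := (hiff x a₂).2 (Or.inr ⟨Or.inl hx, Or.inr h₂⟩)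
    have := τ.2.1 x a₂ this hxy
    exact ⟨this.1, this.2.1⟩
  · have hxy : x ≠ a₁ := by
      intro h
      exact blocks_disj ⟨a₁, hBa₁⟩ ⟨a₂, hBa₂⟩ hne a₁ h₁ (h ▸ hx)
    have : τ.1.r x a₁ := (hiff x a₁).2 (Or.inr ⟨Or.inr hx, Or.inl h₁⟩)
    have := τ.2.1 x a₁ this hxy
    exact ⟨this.1, this.2.1⟩

end AuxCover

section Defs

variable {m : ℕ}

/-- Delete the element `m+1` from a noncrossing partition of `[1,m+1]`. -/
def delTop (π : NCPart (m + 1)) : NCPart m := by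
  refine ⟨⟨fun a b => a = b ∨ (π.1.r a b ∧ a ≠ m + 1 ∧ b ≠ m + 1), ?_, ?_, ?_⟩, ?_, ?_⟩
  · intro a; exact Or.inl rfl
  · rintro a b (rfl | ⟨h, ha, hb⟩)
    · exact Or.inl rfl
    · exact Or.inr ⟨π.1.iseqv.symm h, hb, ha⟩
  · rintro a b c (rfl | ⟨h, ha, hb⟩) h2
    · exact h2
    · rcases h2 with rfl | ⟨h', hb', hc'⟩
      · exact Or.inr ⟨h, ha, hb⟩
      · exact Or.inr ⟨π.1.iseqv.trans h h', ha, hc'⟩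
  · rintro a b (rfl | ⟨h, ha, hb⟩) hne
    · exact absurd rfl hne
    · have := π.2.1 a b h hne
      omega
  · rintro a b c d hab hbc hcd (rfl | ⟨hac, ha, hc⟩) hbd
    · omega
    · rcases hbd with rfl | ⟨hbd, hb, hd⟩
      · omega
      · exact Or.inr ⟨π.2.2 a b c d hab hbc hcd hac hbd, ha, hb⟩

/-- View a noncrossing partition of `[1,m]` as one of `[1,m+1]` with `m+1` a singleton. -/
def ext0 (π : NCPart m) : NCPart (m + 1) := by
  refine ⟨π.1, ?_, π.2.2⟩
  intro a b h hne
  have := π.2.1 a b h hne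
  omega

/-- View a noncrossing partition of `[1,m]` as one of `[1,m+1]` with `m+1` glued to the
block of `m`. -/
def ext1 (hm : 1 ≤ m) (π : NCPart m) : NCPart (m + 1) := by
  have hxm : ∀ x, π.1.r m x → 1 ≤ x ∧ x ≤ m := by
    intro x hx
    by_cases h : x = m
    · omega
    · have := π.2.1 m x hx (by omega)
      omega
  refine ⟨⟨fun a b => π.1.r a b ∨
      ((π.1.r m a ∨ a = m + 1) ∧ (π.1.r m b ∨ b = m + 1)), ?_, ?_, ?_⟩, ?_, ?_⟩
  · intro a; exact Or.inl (π.1.iseqv.refl a)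
  · rintro a b (h | ⟨ha, hb⟩)
    · exact Or.inl (π.1.iseqv.symm h)
    · exact Or.inr ⟨hb, ha⟩
  · rintro a b c (h | ⟨ha, hb⟩) (h' | ⟨hb', hc'⟩)
    · exact Or.inl (π.1.iseqv.trans h h')
    · rcases hb' with hb' | rfl
      · exact Or.inr ⟨Or.inl (π.1.iseqv.trans hb' (π.1.iseqv.symm h)), hc'⟩
      · by_cases hab : a = m + 1
        · exact Or.inr ⟨Or.inr hab, hc'⟩
        · have := π.2.1 a (m+1) h (by omega)
          omega
    · rcases hb with hb | rfl
      · exact Or.inr ⟨ha, Or.inl (π.1.iseqv.trans hb h')⟩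
      · by_cases hcb : c = m + 1
        · exact Or.inr ⟨ha, Or.inr hcb⟩
        · have := π.2.1 (m+1) c h' (by omega)
          omega
    · exact Or.inr ⟨ha, hc'⟩
  · rintro a b (h | ⟨ha, hb⟩) hne
    · have := π.2.1 a b h hne
      omega
    · have h1 : 1 ≤ a ∧ a ≤ m + 1 := by
        rcases ha with ha | rfl
        · have := hxm a ha; omega
        · omega
      have h2 : 1 ≤ b ∧ b ≤ m + 1 := by
        rcases hb with hb | rfl
        · have := hxm b hb; omega
        · omega
      omega
  · rintro a b c d hab hbc hcd hAC hBD
    rcases hBD with hbd | ⟨hb, hd⟩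
    · rcases hAC with hac | ⟨ha, hc⟩
      · exact Or.inl (π.2.2 a b c d hab hbc hcd hac hbd)
      · have hdb : d ≤ m := by
          have := π.2.1 b d hbd (by omega); omega
        have hc' : π.1.r m c := by
          rcases hc with hc | rfl
          · exact hc
          · omega
        have ha' : π.1.r m a := by
          rcases ha with ha | rfl
          · exact ha
          · have := hxm c hc'; omega
        exact Or.inl (π.2.2 a b c d hab hbc hcd
          (π.1.iseqv.trans (π.1.iseqv.symm ha') hc') hbd)
    · rcases hb with hb | rfl
      · have hbm := hxm b hb
        rcases hd with hd | rfl
        · have hbd : π.1.r b d := π.1.iseqv.trans (π.1.iseqv.symm hb) hd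
          rcases hAC with hac | ⟨ha, hc⟩
          · exact Or.inl (π.2.2 a b c d hab hbc hcd hac hbd)
          · have hdm := hxm d hd
            have hc' : π.1.r m c := by
              rcases hc with hc | rfl
              · exact hc
              · omega
            have ha' : π.1.r m a := by
              rcases ha with ha | rfl
              · exact ha
              · have := hxm c hc'; omega
            exact Or.inl (π.1.iseqv.trans (π.1.iseqv.symm ha') hb)
        · rcases hAC with hac | ⟨ha, hc⟩
          · have hcm : c ≤ m := by
              have := π.2.1 a c hac (by omega); omega
            by_cases hcm' : c = m
            · exact Or.inl (π.1.iseqv.trans hac (hcm' ▸ hb))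
            · exact Or.inl (π.2.2 a b c m hab hbc (by omega) hac (π.1.iseqv.symm hb))
          · have hc' : π.1.r m c := by
              rcases hc with hc | rfl
              · exact hc
              · omega
            have ha' : π.1.r m a := by
              rcases ha with ha | rfl
              · exact ha
              · have := hxm c hc'; omega
            exact Or.inl (π.1.iseqv.trans (π.1.iseqv.symm ha') hb)
      · rcases hAC with hac | ⟨ha, hc⟩
        · have := π.2.1 a c hac (by omega)
          omega
        · rcases hc with hc | rfl
          · have := hxm c hc; omega
          · omega

end Defs
section RoundTrip

variable {m : ℕ}

lemma delTop_r (π : NCPart (m + 1)) (a b : ℕ) :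
    (delTop π).1.r a b ↔ a = b ∨ (π.1.r a b ∧ a ≠ m + 1 ∧ b ≠ m + 1) := Iff.rfl

lemma ext0_r (π : NCPart m) (a b : ℕ) : (ext0 π).1.r a b ↔ π.1.r a b := Iff.rfl

lemma ext1_r (hm : 1 ≤ m) (π : NCPart m) (a b : ℕ) :
    (ext1 hm π).1.r a b ↔
      π.1.r a b ∨ ((π.1.r m a ∨ a = m + 1) ∧ (π.1.r m b ∨ b = m + 1)) := Iff.rfl

lemma NCPart.ext {M : ℕ} {π ρ : NCPart M} (h : ∀ a b, π.1.r a b ↔ ρ.1.r a b) : π = ρ :=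
  Subtype.ext (Setoid.ext h)

lemma rel_bound {M : ℕ} (π : NCPart M) {a b : ℕ} (h : π.1.r a b) (hne : a ≠ b) :
    1 ≤ a ∧ a ≤ M ∧ 1 ≤ b ∧ b ≤ M := π.2.1 a b h hne

lemma delTop_ext0 (π : NCPart m) : delTop (ext0 π) = π := by
  apply NCPart.ext
  intro a b
  rw [delTop_r, ext0_r]
  constructor
  · rintro (rfl | ⟨h, _, _⟩)
    · exact π.1.iseqv.refl a
    · exact h
  · intro h
    by_cases hab : a = b
    · exact Or.inl hab
    · have := rel_bound π h hab
      exact Or.inr ⟨h, by omega, by omega⟩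

lemma delTop_ext1 (hm : 1 ≤ m) (π : NCPart m) : delTop (ext1 hm π) = π := by
  apply NCPart.ext
  intro a b
  rw [delTop_r, ext1_r]
  constructor
  · rintro (rfl | ⟨h | ⟨ha, hb⟩, ha', hb'⟩)
    · exact π.1.iseqv.refl a
    · exact h
    · have ha'' : π.1.r m a := by
        rcases ha with ha | rfl
        · exact ha
        · exact absurd rfl ha'
      have hb'' : π.1.r m b := by
        rcases hb with hb | rfl
        · exact hb
        · exact absurd rfl hb'
      exact π.1.iseqv.trans (π.1.iseqv.symm ha'') hb''
  · intro h
    by_cases hab : a = b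
    · exact Or.inl hab
    · have := rel_bound π h hab
      exact Or.inr ⟨Or.inl h, by omega, by omega⟩

lemma ext0_not_rel (hm : 1 ≤ m) (π : NCPart m) : ¬ (ext0 π).1.r m (m + 1) := by
  intro h
  have := rel_bound π h (by omega)
  omega

lemma ext1_rel (hm : 1 ≤ m) (π : NCPart m) : (ext1 hm π).1.r m (m + 1) :=
  Or.inr ⟨Or.inl (π.1.iseqv.refl m), Or.inr rfl⟩

lemma ext0_delTop (π : NCPart (m + 1)) (h : ∀ x, π.1.r (m + 1) x → x = m + 1) :
    ext0 (delTop π) = π := by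
  apply NCPart.ext
  intro a b
  rw [ext0_r, delTop_r]
  constructor
  · rintro (rfl | ⟨h', _, _⟩)
    · exact π.1.iseqv.refl a
    · exact h'
  · intro hr
    by_cases hab : a = b
    · exact Or.inl hab
    · refine Or.inr ⟨hr, ?_, ?_⟩
      · intro ha
        exact hab (((h b (ha ▸ hr)).symm ▸ ha :  a = b))
      · intro hb
        exact hab ((h a (π.1.iseqv.symm (hb ▸ hr))).trans hb.symm)

lemma ext1_delTop (hm : 1 ≤ m) (π : NCPart (m + 1)) (h : π.1.r m (m + 1)) :
    ext1 hm (delTop π) = π := by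
  apply NCPart.ext
  intro a b
  rw [ext1_r, delTop_r]
  have hma : ∀ x, ((delTop π).1.r m x ∨ x = m + 1) → π.1.r m x := by
    intro x hx
    rcases hx with hx | hx
    · rcases (delTop_r π m x).1 hx with h' | ⟨hx', _, _⟩
      · exact h' ▸ π.1.iseqv.refl m
      · exact hx'
    · exact hx ▸ h
  constructor
  · rintro ((rfl | ⟨h', _, _⟩) | ⟨ha, hb⟩)
    · exact π.1.iseqv.refl a
    · exact h'
    · exact π.1.iseqv.trans (π.1.iseqv.symm (hma a ha)) (hma b hb)
  · intro hr
    by_cases hab : a = b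
    · exact Or.inl (Or.inl hab)
    · by_cases ha : a = m + 1
      · refine Or.inr ⟨Or.inr ha, ?_⟩
        by_cases hb : b = m + 1
        · exact Or.inr hb
        · refine Or.inl (Or.inr ⟨π.1.iseqv.trans h (ha ▸ hr), by omega, hb⟩)
      · by_cases hb : b = m + 1
        · refine Or.inr ⟨?_, Or.inr hb⟩
          exact Or.inl (Or.inr ⟨π.1.iseqv.trans h (π.1.iseqv.symm (hb ▸ hr)), by omega, ha⟩)
        · exact Or.inl (Or.inr ⟨hr, ha, hb⟩)

lemma delTop_bot : delTop (ncBot (m + 1)) = ncBot m := by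
  apply NCPart.ext
  intro a b
  rw [delTop_r]
  show _ ↔ a = b
  constructor
  · rintro (rfl | ⟨h, _, _⟩)
    · rfl
    · exact h
  · exact fun h => Or.inl h

lemma delTop_top : delTop (ncTop (m + 1)) = ncTop m := by
  apply NCPart.ext
  intro a b
  rw [delTop_r]
  show _ ↔ (a = b ∨ _)
  show (a = b ∨ ((a = b ∨ (1 ≤ a ∧ a ≤ m + 1 ∧ 1 ≤ b ∧ b ≤ m + 1)) ∧ a ≠ m + 1 ∧ b ≠ m + 1))
    ↔ (a = b ∨ (1 ≤ a ∧ a ≤ m ∧ 1 ≤ b ∧ b ≤ m))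
  omega

lemma ext0_bot : ext0 (ncBot m) = ncBot (m + 1) := by
  apply NCPart.ext
  intro a b
  exact Iff.rfl

lemma ext1_top (hm : 1 ≤ m) : ext1 hm (ncTop m) = ncTop (m + 1) := by
  apply NCPart.ext
  intro a b
  rw [ext1_r]
  show ((a = b ∨ _) ∨ (((m = a ∨ _) ∨ a = m + 1) ∧ ((m = b ∨ _) ∨ b = m + 1))) ↔ (a = b ∨ _)
  show ((a = b ∨ (1 ≤ a ∧ a ≤ m ∧ 1 ≤ b ∧ b ≤ m)) ∨
      (((m = a ∨ (1 ≤ m ∧ m ≤ m ∧ 1 ≤ a ∧ a ≤ m)) ∨ a = m + 1) ∧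
       ((m = b ∨ (1 ≤ m ∧ m ≤ m ∧ 1 ≤ b ∧ b ≤ m)) ∨ b = m + 1))) ↔
    (a = b ∨ (1 ≤ a ∧ a ≤ m + 1 ∧ 1 ≤ b ∧ b ≤ m + 1))
  omega

end RoundTrip
section CoverTransfer

variable {m : ℕ}

lemma block_eq_class {M : ℕ} {π : NCPart M} {B : Set ℕ} (hB : IsBlock π B) {x : ℕ}
    (hx : x ∈ B) : B = {b | π.1.r x b} :=
  blocks_eq hB (isBlock_class π x) hx (mem_own_class π x)

lemma delTop_isBlock {π : NCPart (m + 1)} {B : Set ℕ} (hB : IsBlock π B)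
    (hm1 : m + 1 ∉ B) : IsBlock (delTop π) B := by
  obtain ⟨a, haB⟩ := hB
  have haB' : a ∈ B := by rw [haB]; exact π.1.iseqv.refl a
  have ha : a ≠ m + 1 := fun h => hm1 (h ▸ haB')
  refine ⟨a, ?_⟩
  rw [haB]
  ext b
  simp only [Set.mem_setOf_eq, delTop_r]
  constructor
  · intro hb
    exact Or.inr ⟨hb, ha, fun h => hm1 (by rw [haB]; exact (h ▸ hb : π.1.r a (m+1)))⟩
  · rintro (rfl | ⟨hb, _, _⟩)
    · exact π.1.iseqv.refl a
    · exact hb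

lemma ext1_isBlock_not_mem (hm : 1 ≤ m) {π : NCPart m} {B : Set ℕ} (hB : IsBlock π B)
    (hmB : m ∉ B) (hm1 : m + 1 ∉ B) : IsBlock (ext1 hm π) B := by
  obtain ⟨a, haB⟩ := hB
  have haB' : a ∈ B := by rw [haB]; exact π.1.iseqv.refl a
  have hma : ¬ π.1.r m a := fun h => hmB (by rw [haB]; exact π.1.iseqv.symm h)
  have ha1 : a ≠ m + 1 := fun h => hm1 (h ▸ haB')
  refine ⟨a, ?_⟩
  rw [haB]
  ext b
  simp only [Set.mem_setOf_eq, ext1_r]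
  constructor
  · intro hb
    exact Or.inl hb
  · rintro (hb | ⟨(ha | ha), _⟩)
    · exact hb
    · exact absurd ha hma
    · exact absurd ha ha1

lemma ext1_isBlock_mem (hm : 1 ≤ m) {π : NCPart m} {B : Set ℕ} (hB : IsBlock π B)
    (hmB : m ∈ B) : IsBlock (ext1 hm π) (B ∪ {m + 1}) := by
  have hBc := block_eq_class hB hmB
  refine ⟨m, ?_⟩
  rw [hBc]
  ext b
  simp only [Set.mem_union, Set.mem_setOf_eq, Set.mem_singleton_iff, ext1_r]
  constructor
  · rintro (hb | rfl)
    · exact Or.inl hb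
    · exact Or.inr ⟨Or.inl (π.1.iseqv.refl m), Or.inr rfl⟩
  · rintro (hb | ⟨_, (hb | rfl)⟩)
    · exact Or.inl hb
    · exact Or.inl hb
    · exact Or.inr rfl

lemma cover_ext0 {σ τ : NCPart m} {l : ℕ} (h : CoverLabel σ τ l) :
    CoverLabel (ext0 σ) (ext0 τ) l := h

/-- The merge step: glue `m+1` onto the block of `m`, with label `m`. -/
lemma cover_merge (hm : 1 ≤ m) (π : NCPart m) :
    CoverLabel (ext0 π) (ext1 hm π) m := by
  have hxm : ∀ x, π.1.r m x → 1 ≤ x ∧ x ≤ m := by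
    intro x hx
    by_cases h : x = m
    · omega
    · have := π.2.1 m x hx (by omega)
      omega
  refine ⟨{b | π.1.r m b}, {m + 1}, ⟨m, rfl⟩, ⟨m + 1, ?_⟩, ?_, ?_, ?_, ?_, ?_, ?_⟩
  · ext b
    simp only [Set.mem_singleton_iff, Set.mem_setOf_eq, ext0_r]
    constructor
    · rintro rfl
      exact π.1.iseqv.refl _
    · intro hb
      by_cases h : m + 1 = b
      · omega
      · have := π.2.1 (m+1) b hb h
        omega
  · intro hEq
    have : (m : ℕ) ∈ ({m + 1} : Set ℕ) := hEq ▸ π.1.iseqv.refl m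
    simp only [Set.mem_singleton_iff] at this
    omega
  · intro a b
    rw [ext1_r, ext0_r]
    simp only [Set.mem_union, Set.mem_setOf_eq, Set.mem_singleton_iff]
  · refine ⟨sInf {b | π.1.r m b}, Nat.sInf_mem ⟨m, π.1.iseqv.refl m⟩, ?_⟩
    rintro x (hx | hx)
    · exact Nat.sInf_le hx
    · simp only [Set.mem_singleton_iff] at hx
      subst hx
      have : sInf {b | π.1.r m b} ≤ m := Nat.sInf_le (π.1.iseqv.refl m)
      omega
  · exact π.1.iseqv.refl m
  · rintro y hy
    simp only [Set.mem_singleton_iff] at hy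
    omega
  · intro x hx _
    exact (hxm x hx).2

end CoverTransfer
section CoverExt1

variable {m : ℕ}

set_option maxHeartbeats 1600000 in
lemma cover_ext1 (hm : 1 ≤ m) {σ τ : NCPart m} {l : ℕ} (h : CoverLabel σ τ l) :
    CoverLabel (ext1 hm σ) (ext1 hm τ) l := by
  obtain ⟨B₁, B₂, hB₁, hB₂, hne, hiff, ⟨a₀, ha₀, hmin⟩, hl1, hl2, hl3⟩ := h
  have hUb : ∀ x, x ∈ B₁ ∪ B₂ → 1 ≤ x ∧ x ≤ m := fun x hx =>
    cover_elt_bound hB₁ hB₂ hne hiff hx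
  have hm1 : m + 1 ∉ B₁ ∪ B₂ := fun hx => by have := hUb _ hx; omega
  have hm11 : m + 1 ∉ B₁ := fun hx => hm1 (Or.inl hx)
  have hm12 : m + 1 ∉ B₂ := fun hx => hm1 (Or.inr hx)
  by_cases hmB1 : m ∈ B₁
  · -- m in B₁ : new blocks B₁ ∪ {m+1}, B₂
    have hmB2 : m ∉ B₂ := blocks_disj hB₁ hB₂ hne m hmB1
    have hclsσ : ∀ x, σ.1.r m x ↔ x ∈ B₁ := by
      intro x
      rw [block_eq_class hB₁ hmB1]
      exact Iff.rfl
    have hclsτ : ∀ x, τ.1.r m x ↔ x ∈ B₁ ∪ B₂ := by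
      intro x
      rw [hiff m x]
      constructor
      · rintro (hx | ⟨_, hx⟩)
        · exact Or.inl ((hclsσ x).1 hx)
        · exact hx
      · intro hx
        exact Or.inr ⟨Or.inl hmB1, hx⟩
    refine ⟨B₁ ∪ {m + 1}, B₂, ext1_isBlock_mem hm hB₁ hmB1,
      ext1_isBlock_not_mem hm hB₂ hmB2 hm12, ?_, ?_, ?_, ?_, ?_, ?_⟩
    · intro hEq
      have hmem : m + 1 ∈ B₁ ∪ {m + 1} := Set.mem_union_right _ rfl
      rw [hEq] at hmem
      exact hm12 hmem
    · intro a b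
      simp only [ext1_r]
      rw [hiff a b, hclsτ a, hclsτ b, hclsσ a, hclsσ b]
      simp only [Set.mem_union, Set.mem_singleton_iff]
      tauto
    · refine ⟨a₀, Set.mem_union_left _ ha₀, ?_⟩
      intro x hx
      simp only [Set.mem_union, Set.mem_singleton_iff] at hx
      rcases hx with (hx | rfl) | hx
      · exact hmin x (Or.inl hx)
      · have := hUb a₀ (Or.inl ha₀); omega
      · exact hmin x (Or.inr hx)
    · exact Or.inl hl1
    · exact hl2
    · intro x hx hxlt
      simp only [Set.mem_union, Set.mem_singleton_iff] at hx
      rcases hx with hx | rfl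
      · exact hl3 x hx hxlt
      · obtain ⟨a₂, ha₂⟩ := hB₂
        have ha₂' : a₂ ∈ B₂ := by rw [ha₂]; exact σ.1.iseqv.refl a₂
        have := hUb a₂ (Or.inr ha₂')
        have := hxlt a₂ ha₂'
        omega
  · by_cases hmB2 : m ∈ B₂
    · -- m in B₂ : new blocks B₁, B₂ ∪ {m+1}
      have hclsσ : ∀ x, σ.1.r m x ↔ x ∈ B₂ := by
        intro x
        rw [block_eq_class hB₂ hmB2]
        exact Iff.rfl
      have hclsτ : ∀ x, τ.1.r m x ↔ x ∈ B₁ ∪ B₂ := by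
        intro x
        rw [hiff m x]
        constructor
        · rintro (hx | ⟨_, hx⟩)
          · exact Or.inr ((hclsσ x).1 hx)
          · exact hx
        · intro hx
          exact Or.inr ⟨Or.inr hmB2, hx⟩
      refine ⟨B₁, B₂ ∪ {m + 1}, ext1_isBlock_not_mem hm hB₁ hmB1 hm11,
        ext1_isBlock_mem hm hB₂ hmB2, ?_, ?_, ?_, ?_, ?_, ?_⟩
      · intro hEq
        have hmem : m + 1 ∈ B₂ ∪ {m + 1} := Set.mem_union_right _ rfl
        rw [← hEq] at hmem
        exact hm11 hmem
      · intro a b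
        simp only [ext1_r]
        rw [hiff a b, hclsτ a, hclsτ b, hclsσ a, hclsσ b]
        simp only [Set.mem_union, Set.mem_singleton_iff]
        tauto
      · refine ⟨a₀, ha₀, ?_⟩
        intro x hx
        simp only [Set.mem_union, Set.mem_singleton_iff] at hx
        rcases hx with hx | (hx | rfl)
        · exact hmin x (Or.inl hx)
        · exact hmin x (Or.inr hx)
        · have := hUb a₀ (Or.inl ha₀); omega
      · exact hl1
      · intro y hy
        simp only [Set.mem_union, Set.mem_singleton_iff] at hy
        rcases hy with hy | rfl
        · exact hl2 y hy
        · have := hUb l (Or.inl hl1); omega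
      · intro x hx hxlt
        exact hl3 x hx fun y hy => hxlt y (Set.mem_union_left _ hy)
    · -- m not in B₁ ∪ B₂
      have hmU : m ∉ B₁ ∪ B₂ := by
        rintro (hx | hx)
        · exact hmB1 hx
        · exact hmB2 hx
      have hclsτ : ∀ x, τ.1.r m x ↔ σ.1.r m x := by
        intro x
        rw [hiff m x]
        constructor
        · rintro (hx | ⟨hx, _⟩)
          · exact hx
          · exact absurd hx hmU
        · exact fun hx => Or.inl hx
      refine ⟨B₁, B₂, ext1_isBlock_not_mem hm hB₁ hmB1 hm11,
        ext1_isBlock_not_mem hm hB₂ hmB2 hm12, hne, ?_, ⟨a₀, ha₀, hmin⟩, hl1, hl2, hl3⟩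
      intro a b
      simp only [ext1_r]
      rw [hiff a b, hclsτ a, hclsτ b]
      simp only [Set.mem_union]
      tauto
end CoverExt1
section CoverDel

variable {m : ℕ}

lemma delTop_isBlock_diff {π : NCPart (m + 1)} {B : Set ℕ} (hB : IsBlock π B) {x : ℕ}
    (hx : x ∈ B) (hxne : x ≠ m + 1) : IsBlock (delTop π) (B \ {m + 1}) := by
  have hBc := block_eq_class hB hx
  refine ⟨x, ?_⟩
  ext b
  simp only [Set.mem_diff, Set.mem_singleton_iff, Set.mem_setOf_eq, delTop_r, hBc]
  constructor
  · rintro ⟨hb, hbne⟩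
    exact Or.inr ⟨hb, hxne, hbne⟩
  · rintro (rfl | ⟨hb, _, hbne⟩)
    · exact ⟨π.1.iseqv.refl _, hxne⟩
    · exact ⟨hb, hbne⟩

set_option maxHeartbeats 1600000 in
lemma cover_delTop {σ τ : NCPart (m + 1)} {l : ℕ} (h : CoverLabel σ τ l)
    (hgood : σ.1.r m (m + 1) ∨ (∀ x, τ.1.r (m + 1) x → x = m + 1)) :
    CoverLabel (delTop σ) (delTop τ) l := by
  obtain ⟨B₁, B₂, hB₁, hB₂, hne, hiff, ⟨a₀, ha₀, hmin⟩, hl1, hl2, hl3⟩ := h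
  have hUb : ∀ x, x ∈ B₁ ∪ B₂ → 1 ≤ x ∧ x ≤ m + 1 := fun x hx =>
    cover_elt_bound hB₁ hB₂ hne hiff hx
  obtain ⟨a₁, ha₁c⟩ := hB₁
  obtain ⟨a₂, ha₂c⟩ := hB₂
  have ha₁ : a₁ ∈ B₁ := by rw [ha₁c]; exact σ.1.iseqv.refl a₁
  have ha₂ : a₂ ∈ B₂ := by rw [ha₂c]; exact σ.1.iseqv.refl a₂
  have hdisj1 := blocks_disj ⟨a₁, ha₁c⟩ ⟨a₂, ha₂c⟩ hne
  have hdisj2 : ∀ x, x ∈ B₂ → x ∉ B₁ := fun x hx hx' => hdisj1 x hx' hx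
  by_cases hU : m + 1 ∈ B₁ ∪ B₂
  · -- m+1 is in a merged block; derive that σ joins m and m+1
    have hjoin : σ.1.r m (m + 1) := by
      rcases hgood with hgood | hgood
      · exact hgood
      · exfalso
        rcases hU with hU | hU
        · have : τ.1.r (m+1) a₂ := (hiff _ _).2 (Or.inr ⟨Or.inl hU, Or.inr ha₂⟩)
          exact hdisj1 a₂ (hgood a₂ this ▸ hU) ha₂
        · have : τ.1.r (m+1) a₁ := (hiff _ _).2 (Or.inr ⟨Or.inr hU, Or.inl ha₁⟩)
          exact hdisj1 a₁ ha₁ (hgood a₁ this ▸ hU)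
    rcases hU with hU | hU
    · -- m+1 ∈ B₁
      have hm1B2 : m + 1 ∉ B₂ := hdisj1 (m+1) hU
      have hmB1 : m ∈ B₁ := block_closed ⟨a₁, ha₁c⟩ hU (σ.1.iseqv.symm hjoin)
      have hmem : ∀ x, x ∈ (B₁ \ {m+1}) ∪ B₂ ↔ (x ∈ B₁ ∪ B₂ ∧ x ≠ m + 1) := by
        intro x
        simp only [Set.mem_union, Set.mem_diff, Set.mem_singleton_iff]
        constructor
        · rintro (⟨hx, hxne⟩ | hx)
          · exact ⟨Or.inl hx, hxne⟩
          · exact ⟨Or.inr hx, fun hh => hm1B2 (hh ▸ hx)⟩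
        · rintro ⟨hx | hx, hxne⟩
          · exact Or.inl ⟨hx, hxne⟩
          · exact Or.inr hx
      refine ⟨B₁ \ {m+1}, B₂, delTop_isBlock_diff ⟨a₁, ha₁c⟩ hmB1 (by omega),
        delTop_isBlock ⟨a₂, ha₂c⟩ hm1B2, ?_, ?_, ?_, ?_, ?_, ?_⟩
      · intro hEq
        have : a₂ ∈ B₁ \ {m+1} := hEq ▸ ha₂
        exact hdisj1 a₂ this.1 ha₂
      · intro a b
        rw [delTop_r, delTop_r, hiff a b, hmem a, hmem b]
        tauto
      · have ha₀m : a₀ ≤ m := by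
          have h1 := hmin m (Or.inl hmB1)
          omega
        refine ⟨a₀, ⟨ha₀, ?_⟩, ?_⟩
        · simp only [Set.mem_singleton_iff]
          omega
        intro x hx
        exact hmin x ((hmem x).1 hx).1
      · refine ⟨hl1, ?_⟩
        have := hUb a₂ (Or.inr ha₂)
        have := hl2 a₂ ha₂
        simp only [Set.mem_singleton_iff]
        omega
      · exact hl2
      · intro x hx hxlt
        exact hl3 x hx.1 hxlt
    · -- m+1 ∈ B₂
      have hm1B1 : m + 1 ∉ B₁ := hdisj2 (m+1) hU
      have hmB2 : m ∈ B₂ := block_closed ⟨a₂, ha₂c⟩ hU (σ.1.iseqv.symm hjoin)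
      have hmem : ∀ x, x ∈ B₁ ∪ (B₂ \ {m+1}) ↔ (x ∈ B₁ ∪ B₂ ∧ x ≠ m + 1) := by
        intro x
        simp only [Set.mem_union, Set.mem_diff, Set.mem_singleton_iff]
        constructor
        · rintro (hx | ⟨hx, hxne⟩)
          · exact ⟨Or.inl hx, fun hh => hm1B1 (hh ▸ hx)⟩
          · exact ⟨Or.inr hx, hxne⟩
        · rintro ⟨hx | hx, hxne⟩
          · exact Or.inl hx
          · exact Or.inr ⟨hx, hxne⟩
      refine ⟨B₁, B₂ \ {m+1}, delTop_isBlock ⟨a₁, ha₁c⟩ hm1B1,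
        delTop_isBlock_diff ⟨a₂, ha₂c⟩ hmB2 (by omega), ?_, ?_, ?_, ?_, ?_, ?_⟩
      · intro hEq
        have hmB2' : m ∈ B₂ \ {m+1} := ⟨hmB2, by simp⟩
        rw [← hEq] at hmB2'
        exact hdisj1 m hmB2' hmB2
      · intro a b
        rw [delTop_r, delTop_r, hiff a b, hmem a, hmem b]
        tauto
      · refine ⟨a₀, ha₀, ?_⟩
        intro x hx
        exact hmin x ((hmem x).1 hx).1
      · exact hl1
      · intro y hy
        exact hl2 y hy.1
      · intro x hx hxlt
        refine hl3 x hx ?_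
        intro y hy
        by_cases hym : y = m + 1
        · have h1 := hUb x (Or.inl hx)
          have h2 : x ≠ m + 1 := fun hh => hm1B1 (hh ▸ hx)
          omega
        · exact hxlt y ⟨hy, hym⟩
  · -- m+1 not involved
    have hm1B1 : m + 1 ∉ B₁ := fun hx => hU (Or.inl hx)
    have hm1B2 : m + 1 ∉ B₂ := fun hx => hU (Or.inr hx)
    refine ⟨B₁, B₂, delTop_isBlock ⟨a₁, ha₁c⟩ hm1B1, delTop_isBlock ⟨a₂, ha₂c⟩ hm1B2,
      hne, ?_, ⟨a₀, ha₀, hmin⟩, hl1, hl2, hl3⟩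
    intro a b
    rw [delTop_r, delTop_r, hiff a b]
    have hane : a ∈ B₁ ∪ B₂ → a ≠ m + 1 := fun hx hh => hU (hh ▸ hx)
    have hbne : b ∈ B₁ ∪ B₂ → b ≠ m + 1 := fun hx hh => hU (hh ▸ hx)
    tauto

end CoverDel
section Counting

lemma card_ins (N q x v : ℕ) (hq : q ≤ N) (g : ℕ → ℕ) :
    (Finset.univ.filter fun j : Fin (N+1) =>
        (if (j:ℕ) < q then g j else if (j:ℕ) = q then x else g ((j:ℕ)-1)) ≤ v).card
      = (Finset.univ.filter fun j : Fin N => g j ≤ v).card + (if x ≤ v then 1 else 0) := by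
  have hFdef : ∀ j : ℕ, j < q →
      ((if j < q then g j else if j = q then x else g (j-1)) = g j) := by
    intro j hj; rw [if_pos hj]
  rw [Finset.card_filter, Finset.card_filter,
    Fin.sum_univ_eq_sum_range
      (fun j => if (if j < q then g j else if j = q then x else g (j-1)) ≤ v then 1 else 0) (N+1),
    Fin.sum_univ_eq_sum_range (fun j => if g j ≤ v then 1 else 0) N]
  set F : ℕ → ℕ := fun j => if (if j < q then g j else if j = q then x else g (j-1)) ≤ v then 1 else 0 with hF
  set G : ℕ → ℕ := fun j => if g j ≤ v then 1 else 0 with hG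
  have h1 : ∑ j ∈ Finset.range (N+1), F j
      = ∑ j ∈ Finset.range q, F j + ∑ j ∈ Finset.Ico q (N+1), F j := by
    simp only [Finset.range_eq_Ico]
    exact (Finset.sum_Ico_consecutive F (Nat.zero_le q) (by omega)).symm
  have h2 : ∑ j ∈ Finset.Ico q (N+1), F j = F q + ∑ j ∈ Finset.Ico (q+1) (N+1), F j :=
    Finset.sum_eq_sum_Ico_succ_bot (by omega) F
  have h3 : ∑ j ∈ Finset.Ico (q+1) (N+1), F j = ∑ j ∈ Finset.Ico q N, G j := by
    rw [Finset.sum_Ico_eq_sum_range, Finset.sum_Ico_eq_sum_range]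
    have : N + 1 - (q + 1) = N - q := by omega
    rw [this]
    apply Finset.sum_congr rfl
    intro i _
    simp only [hF, hG]
    have h4 : ¬ (q + 1 + i < q) := by omega
    have h5 : ¬ (q + 1 + i = q) := by omega
    have h9 : q + 1 + i - 1 = q + i := by omega
    rw [if_neg h4, if_neg h5, h9]
  have h6 : ∑ j ∈ Finset.range q, F j = ∑ j ∈ Finset.range q, G j := by
    apply Finset.sum_congr rfl
    intro i hi
    simp only [Finset.mem_range] at hi
    simp only [hF, hG, if_pos hi]
  have h7 : F q = if x ≤ v then 1 else 0 := by
    simp [hF]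
  have h8 : ∑ j ∈ Finset.range N, G j
      = ∑ j ∈ Finset.range q, G j + ∑ j ∈ Finset.Ico q N, G j := by
    simp only [Finset.range_eq_Ico]
    exact (Finset.sum_Ico_consecutive G (Nat.zero_le q) hq).symm
  have h10 : (Finset.range N).sum G = ∑ j ∈ Finset.range N, G j := rfl
  have h11 : (Finset.range (N+1)).sum F = ∑ j ∈ Finset.range (N+1), F j := rfl
  omega

/-- From `IsPFnk (p+1) k`: there is a unique position carrying the label `p+1`,
and every label is between 1 and `p+1`. -/
lemma pfnk_top_label {p k : ℕ} {f : Fin (p+1) → ℕ} (hf : IsPFnk (p+1) k f)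
    (hk2 : 2 ≤ k) (hkp : k ≤ p) :
    (∀ j, 1 ≤ f j ∧ f j ≤ p + 1) ∧
    ∃ t : Fin (p+1), f t = p + 1 ∧ ∀ j, j ≠ t → f j ≤ p := by
  obtain ⟨⟨hpos, hpark⟩, hk, hsur⟩ := hf
  have hcard : (Finset.univ : Finset (Fin (p+1))).card = p + 1 := by simp
  have hall : ∀ j, f j ≤ p + 1 := by
    have h1 := hpark ⟨p, by omega⟩
    simp only at h1
    have h2 : (Finset.univ.filter fun j : Fin (p+1) => f j ≤ p + 1) = Finset.univ := by
      apply Finset.eq_univ_of_card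
      have h3 : Fintype.card (Fin (p+1)) = p + 1 := Fintype.card_fin _
      have := Finset.card_filter_le (Finset.univ : Finset (Fin (p+1)))
        (fun j : Fin (p+1) => f j ≤ p + 1)
      omega
    intro j
    have : j ∈ Finset.univ.filter fun j : Fin (p+1) => f j ≤ p + 1 := by
      rw [h2]; exact Finset.mem_univ j
    exact (Finset.mem_filter.1 this).2
  obtain ⟨t, ht⟩ := hsur (p+1) (by omega) le_rfl
  refine ⟨fun j => ⟨hpos j, hall j⟩, t, ht, ?_⟩
  intro j hjt
  by_contra hj
  push_neg at hj
  have hpk : p ≤ (Finset.univ.filter fun j : Fin (p+1) => f j ≤ p).card := by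
    have h1 := hpark ⟨p - 1, by omega⟩
    simp only at h1
    have : p - 1 + 1 = p := by omega
    rwa [this] at h1
  have hsub : ({t, j} : Finset (Fin (p+1))) ⊆
      Finset.univ.filter fun j : Fin (p+1) => ¬ f j ≤ p := by
    intro x hx
    simp only [Finset.mem_insert, Finset.mem_singleton] at hx
    rcases hx with rfl | rfl
    · simp only [Finset.mem_filter, Finset.mem_univ, true_and]
      omega
    · simp only [Finset.mem_filter, Finset.mem_univ, true_and]
      omega
  have hc2 : ({t, j} : Finset (Fin (p+1))).card = 2 := by
    rw [Finset.card_insert_of_notMem (by simp [Ne.symm hjt]), Finset.card_singleton]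
  have hle := Finset.card_le_card hsub
  have hsplit := Finset.card_filter_add_card_filter_not
    (s := (Finset.univ : Finset (Fin (p+1)))) (p := fun j : Fin (p+1) => f j ≤ p)
  omega

end Counting
section ChainLemmas

variable {m : ℕ}

lemma cover_B2_top {σ τ : NCPart (m+1)} (h : CoverLabel σ τ m) :
    ∃ B₁ B₂ : Set ℕ, IsBlock σ B₁ ∧ IsBlock σ B₂ ∧ B₁ ≠ B₂ ∧
      (∀ a b, τ.1.r a b ↔ (σ.1.r a b ∨ (a ∈ B₁ ∪ B₂ ∧ b ∈ B₁ ∪ B₂))) ∧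
      m ∈ B₁ ∧ (∀ y, y ∈ B₂ ↔ y = m + 1) := by
  obtain ⟨B₁, B₂, hB₁, hB₂, hne, hiff, hmin, hl1, hl2, hl3⟩ := h
  obtain ⟨a₂, ha₂c⟩ := hB₂
  have ha₂ : a₂ ∈ B₂ := by rw [ha₂c]; exact σ.1.iseqv.refl a₂
  have hBy : ∀ y ∈ B₂, y = m + 1 := by
    intro y hy
    have h1 : τ.1.r m y := (hiff m y).2 (Or.inr ⟨Or.inl hl1, Or.inr hy⟩)
    have h2 := hl2 y hy
    have h3 := τ.2.1 m y h1 (by omega)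
    omega
  have ha₂1 : a₂ = m + 1 := hBy a₂ ha₂
  refine ⟨B₁, B₂, hB₁, ⟨a₂, ha₂c⟩, hne, hiff, hl1, ?_⟩
  intro y
  constructor
  · exact hBy y
  · rintro rfl
    exact ha₂1 ▸ ha₂

lemma label_top_step {σ τ : NCPart (m+1)} (h : CoverLabel σ τ m) :
    (∀ x, σ.1.r (m+1) x → x = m+1) ∧ τ.1.r m (m+1) := by
  obtain ⟨B₁, B₂, hB₁, hB₂, hne, hiff, hl1, hB₂top⟩ := cover_B2_top h
  constructor
  · intro x hx
    have hm1 : (m+1) ∈ B₂ := (hB₂top (m+1)).2 rfl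
    have : x ∈ B₂ := block_closed hB₂ hm1 hx
    exact (hB₂top x).1 this
  · exact (hiff _ _).2 (Or.inr ⟨Or.inl hl1, Or.inr ((hB₂top (m+1)).2 rfl)⟩)

lemma merge_delTop_eq {σ τ : NCPart (m+1)} (h : CoverLabel σ τ m) :
    delTop σ = delTop τ := by
  obtain ⟨B₁, B₂, hB₁, hB₂, hne, hiff, hl1, hB₂top⟩ := cover_B2_top h
  apply NCPart.ext
  intro a b
  rw [delTop_r, delTop_r]
  constructor
  · rintro (rfl | ⟨hr, ha, hb⟩)
    · exact Or.inl rfl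
    · exact Or.inr ⟨(hiff a b).2 (Or.inl hr), ha, hb⟩
  · rintro (rfl | ⟨hr, ha, hb⟩)
    · exact Or.inl rfl
    · rcases (hiff a b).1 hr with hr' | ⟨hau, hbu⟩
      · exact Or.inr ⟨hr', ha, hb⟩
      · have haB : a ∈ B₁ := by
          rcases hau with h' | h'
          · exact h'
          · exact absurd ((hB₂top a).1 h') ha
        have hbB : b ∈ B₁ := by
          rcases hbu with h' | h'
          · exact h'
          · exact absurd ((hB₂top b).1 h') hb
        exact Or.inr ⟨block_rel hB₁ haB hbB, ha, hb⟩

lemma chain_mono {M N : ℕ} {c : ℕ → NCPart M} {ℓ : ℕ → ℕ}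
    (hch : ∀ i < N, CoverLabel (c i) (c (i+1)) (ℓ i)) {i j : ℕ} (hij : i ≤ j) (hj : j ≤ N)
    {a b : ℕ} (hab : (c i).1.r a b) : (c j).1.r a b := by
  induction j with
  | zero =>
    have : i = 0 := by omega
    exact this ▸ hab
  | succ j ih =>
    by_cases hij' : i = j + 1
    · exact hij' ▸ hab
    · have h1 : (c j).1.r a b := ih (by omega) (by omega)
      exact cover_mono (hch j (by omega)) h1

lemma chain_struct {p k : ℕ} {c : ℕ → NCPart (p+2)} {ℓ : ℕ → ℕ}
    (hc : IsPFChain (p+1) k c ℓ) (hk2 : 2 ≤ k) (hkp : k ≤ p) :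
    ∃ t ≤ p, ℓ t = p + 1 ∧ (∀ j < p + 1, j ≠ t → ℓ j ≤ p) ∧
      (∀ i ≤ t, ∀ x, (c i).1.r (p+2) x → x = p+2) ∧
      (∀ i, t < i → i ≤ p+1 → (c i).1.r (p+1) (p+2)) := by
  obtain ⟨hbot, htop, hch, hpf⟩ := hc
  obtain ⟨hbounds, t, ht, huniq⟩ := pfnk_top_label hpf hk2 hkp
  have htp : (t : ℕ) < p + 1 := t.2
  have hstep : CoverLabel (c t) (c ((t : ℕ)+1)) (p+1) := by
    have := hch t htp
    rwa [ht] at this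
  have hsplit := label_top_step (m := p + 1) (σ := c t) (τ := c ((t : ℕ)+1)) hstep
  refine ⟨t, by omega, ht, ?_, ?_, ?_⟩
  · intro j hj hjt
    exact huniq ⟨j, hj⟩ (by simp only [Fin.ne_iff_vne]; exact hjt)
  · intro i hi x hx
    exact hsplit.1 x (chain_mono hch hi (by omega) hx)
  · intro i hi hip
    exact chain_mono hch (by omega : (t:ℕ)+1 ≤ i) hip hsplit.2

end ChainLemmas
section ChainDelete

lemma chain_delete {p k : ℕ} {c : ℕ → NCPart (p+2)} {ℓ : ℕ → ℕ}
    (hc : IsPFChain (p+1) k c ℓ) (hk2 : 2 ≤ k) (hkp : k ≤ p) {t : ℕ} (htp : t ≤ p)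
    (ht : ℓ t = p + 1) (huniq : ∀ j < p+1, j ≠ t → ℓ j ≤ p)
    (hsing : ∀ i ≤ t, ∀ x, (c i).1.r (p+2) x → x = p+2)
    (hjoin : ∀ i, t < i → i ≤ p+1 → (c i).1.r (p+1) (p+2)) :
    IsPFChain p k (fun j => delTop (c (if j < t then j else j + 1)))
      (fun j => if j < t then ℓ j else ℓ (j + 1)) := by
  obtain ⟨hbot, htop, hch, hpf⟩ := hc
  have hmerget : delTop (c t) = delTop (c (t+1)) := by
    refine merge_delTop_eq (m := p+1) (σ := c t) (τ := c (t+1)) ?_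
    have := hch t (by omega)
    rwa [ht] at this
  obtain ⟨⟨hpos, hpark⟩, hkabs, hsur⟩ := hpf
  have hgfun : ∀ j < p + 1,
      (if j < t then (if j < t then ℓ j else ℓ (j+1))
       else if j = t then p + 1
       else (if (j-1) < t then ℓ (j-1) else ℓ ((j-1) + 1))) = ℓ j := by
    intro j hj
    by_cases h1 : j < t
    · simp [h1]
    · by_cases h2 : j = t
      · simp [h1, h2, ← ht]
      · have h3 : ¬ (j - 1 < t) := by omega
        have h4 : j - 1 + 1 = j := by omega
        simp [h1, h2, h3, h4]
  have hcard : ∀ v : ℕ,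
      (Finset.univ.filter fun j : Fin (p+1) => ℓ (j:ℕ) ≤ v).card
        = (Finset.univ.filter fun j : Fin p =>
            (if (j:ℕ) < t then ℓ (j:ℕ) else ℓ ((j:ℕ) + 1)) ≤ v).card
          + (if p + 1 ≤ v then 1 else 0) := by
    intro v
    have hins := card_ins p t (p+1) v htp (fun j => if j < t then ℓ j else ℓ (j + 1))
    rw [← hins]
    congr 1
    apply Finset.filter_congr
    intro j _
    have h2 : (if (j:ℕ) < t then (if (j:ℕ) < t then ℓ (j:ℕ) else ℓ ((j:ℕ)+1))
        else if (j:ℕ) = t then p+1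
        else (if (j:ℕ)-1 < t then ℓ ((j:ℕ)-1) else ℓ ((j:ℕ)-1+1))) = ℓ (j:ℕ) :=
      hgfun (j:ℕ) j.2
    rw [h2]
  refine ⟨?_, ?_, ?_, ⟨?_, ?_⟩, ?_, ?_⟩
  · -- bottom
    by_cases h0 : 0 < t
    · simp only [if_pos h0, hbot, delTop_bot]
    · have ht0 : t = 0 := by omega
      simp only [if_neg h0]
      rw [ht0] at hmerget
      rw [← hmerget, hbot, delTop_bot]
  · -- top
    have : ¬ (p < t) := by omega
    simp only [if_neg this]
    rw [htop, delTop_top]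
  · -- covers
    intro j hj
    by_cases h1 : j + 1 < t
    · have h2 : j < t := by omega
      simp only [if_pos h1, if_pos h2]
      exact cover_delTop (m := p+1) (hch j (by omega))
        (Or.inr (hsing (j+1) (by omega)))
    · by_cases h2 : j + 1 = t
      · have h3 : j < t := by omega
        simp only [if_neg h1, if_pos h3]
        have h5 : j + 1 + 1 = t + 1 := by omega
        rw [h5, ← hmerget, ← h2]
        exact cover_delTop (m := p+1) (hch j (by omega)) (Or.inr (hsing (j+1) (by omega)))
      · -- j ≥ t
        have h3 : ¬ (j < t) := by omega
        have h4 : ¬ (j + 1 < t) := by omega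
        simp only [if_neg h1, if_neg h3, if_neg h4]
        exact cover_delTop (m := p+1) (hch (j+1) (by omega))
          (Or.inl (hjoin (j+1) (by omega) (by omega)))
  · -- positivity of labels
    intro i
    by_cases h1 : (i : ℕ) < t
    · simp only [if_pos h1]; exact hpos ⟨i, by omega⟩
    · simp only [if_neg h1]; exact hpos ⟨(i:ℕ)+1, by omega⟩
  · -- parking
    intro i
    have h1 : (i : ℕ) + 1 ≤
        (Finset.univ.filter fun j : Fin (p+1) => ℓ (j:ℕ) ≤ (i:ℕ) + 1).card :=
      hpark ⟨(i : ℕ), by omega⟩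
    rw [hcard ((i:ℕ)+1), if_neg (by omega : ¬ (p + 1 ≤ (i:ℕ) + 1))] at h1
    simpa using h1
  · -- k avoided
    intro i
    by_cases h1 : (i : ℕ) < t
    · simp only [if_pos h1]; exact hkabs ⟨i, by omega⟩
    · simp only [if_neg h1]; exact hkabs ⟨(i:ℕ)+1, by omega⟩
  · -- surjectivity onto (k, p]
    intro m' hkm' hm'p
    obtain ⟨i, hi'⟩ := hsur m' hkm' (by omega)
    have hi : ℓ (i : ℕ) = m' := hi'
    have hit : (i : ℕ) ≠ t := by
      intro hh
      rw [hh, ht] at hi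
      omega
    by_cases h1 : (i : ℕ) < t
    · exact ⟨⟨i, by omega⟩, by simp only [if_pos h1]; exact hi⟩
    · have h2 : t < (i : ℕ) := by omega
      refine ⟨⟨(i:ℕ) - 1, by omega⟩, ?_⟩
      have h3 : ¬ ((i:ℕ) - 1 < t) := by omega
      simp only [if_neg h3]
      have h4 : (i:ℕ) - 1 + 1 = (i : ℕ) := by omega
      rw [h4]
      exact hi

end ChainDelete
section ChainInsert

lemma chain_insert {p k : ℕ} {c' : ℕ → NCPart (p+1)} {ℓ' : ℕ → ℕ}
    (hc : IsPFChain p k c' ℓ') (hk2 : 2 ≤ k) (hkp : k ≤ p) {q : ℕ} (hq : q ≤ p) :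
    IsPFChain (p+1) k
      (fun i => if i ≤ q then ext0 (c' i) else ext1 (by omega : 1 ≤ p+1) (c' (i-1)))
      (fun i => if i < q then ℓ' i else if i = q then p + 1 else ℓ' (i-1)) := by
  obtain ⟨hbot, htop, hch, hpf⟩ := hc
  obtain ⟨⟨hpos, hpark⟩, hkabs, hsur⟩ := hpf
  have hallp : ∀ j : Fin p, ℓ' (j : ℕ) ≤ p := by
    intro j
    by_contra hj
    push_neg at hj
    have hplt : p - 1 < p := by omega
    have h1 : p ≤ (Finset.univ.filter fun jj : Fin p => ℓ' (jj:ℕ) ≤ p).card := by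
      have h0 := hpark ⟨p - 1, hplt⟩
      have hv : ((⟨p - 1, hplt⟩ : Fin p) : ℕ) = p - 1 := rfl
      rw [hv] at h0
      have hp1 : p - 1 + 1 = p := by omega
      rw [hp1] at h0
      exact h0
    have hsub : (Finset.univ.filter fun jj : Fin p => ℓ' (jj:ℕ) ≤ p) ⊆
        Finset.univ.erase j := by
      intro x hx
      simp only [Finset.mem_filter] at hx
      rw [Finset.mem_erase]
      refine ⟨?_, Finset.mem_univ x⟩
      intro hxj
      subst hxj
      omega
    have h2 := Finset.card_le_card hsub
    have h3 : (Finset.univ.erase j).card = p - 1 := by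
      rw [Finset.card_erase_of_mem (Finset.mem_univ j)]
      simp
    omega
  refine ⟨?_, ?_, ?_, ⟨?_, ?_⟩, ?_, ?_⟩
  · -- bottom
    simp only [if_pos (Nat.zero_le q)]
    rw [hbot, ext0_bot]
  · -- top
    have h1 : ¬ (p + 1 ≤ q) := by omega
    simp only [if_neg h1]
    have h2 : p + 1 - 1 = p := by omega
    rw [h2, htop, ext1_top]
  · -- covers
    intro i hi
    by_cases h1 : i < q
    · have h2 : i ≤ q := by omega
      have h3 : i + 1 ≤ q := by omega
      simp only [if_pos h1, if_pos h2, if_pos h3]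
      exact cover_ext0 (hch i (by omega))
    · by_cases h2 : i = q
      · subst h2
        have h3 : ¬ (i + 1 ≤ i) := by omega
        have h4 : i + 1 - 1 = i := by omega
        simp only [if_neg h1, if_pos rfl, if_pos (le_refl i), if_neg h3, h4]
        exact cover_merge (by omega : 1 ≤ p + 1) (c' i)
      · have h3 : ¬ (i ≤ q) := by omega
        have h4 : ¬ (i + 1 ≤ q) := by omega
        have h5 : i + 1 - 1 = i := by omega
        simp only [if_neg h1, if_neg h2, if_neg h3, if_neg h4, h5]
        have h6 : i - 1 + 1 = i := by omega
        have hcov := cover_ext1 (by omega : 1 ≤ p+1) (hch (i-1) (by omega))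
        rwa [h6] at hcov
  · -- positivity
    intro i
    by_cases h1 : (i:ℕ) < q
    · simpa only [if_pos h1] using hpos ⟨(i:ℕ), by omega⟩
    · by_cases h2 : (i:ℕ) = q
      · simp only [if_neg h1, if_pos h2]
        omega
      · simpa only [if_neg h1, if_neg h2] using hpos ⟨(i:ℕ) - 1, by omega⟩
  · -- parking
    intro i
    have hins := card_ins p q (p+1) ((i:ℕ)+1) hq ℓ'
    by_cases h1 : (i:ℕ) < p
    · have h2 : (i:ℕ)+1 ≤ (Finset.univ.filter fun j : Fin p => ℓ' (j:ℕ) ≤ (i:ℕ)+1).card :=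
        hpark ⟨(i:ℕ), h1⟩
      rw [hins]
      omega
    · have h1' : (i : ℕ) = p := by omega
      rw [hins]
      have h2 : (Finset.univ.filter fun j : Fin p => ℓ' (j:ℕ) ≤ (i:ℕ)+1).card = p := by
        have : (Finset.univ.filter fun j : Fin p => ℓ' (j:ℕ) ≤ (i:ℕ)+1) = Finset.univ := by
          apply Finset.eq_univ_of_forall
          intro j
          simp only [Finset.mem_filter, Finset.mem_univ, true_and]
          have := hallp j
          omega
        rw [this]
        simp
      rw [h2, if_pos (by omega : p + 1 ≤ (i:ℕ)+1)]
      omega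
  · -- k avoided
    intro i
    by_cases h1 : (i:ℕ) < q
    · simpa only [if_pos h1] using hkabs ⟨(i:ℕ), by omega⟩
    · by_cases h2 : (i:ℕ) = q
      · simp only [if_neg h1, if_pos h2]
        omega
      · simpa only [if_neg h1, if_neg h2] using hkabs ⟨(i:ℕ) - 1, by omega⟩
  · -- surjectivity
    intro m' hkm' hm'
    by_cases hm'p : m' = p + 1
    · refine ⟨⟨q, by omega⟩, ?_⟩
      show (if q < q then ℓ' q else if q = q then p + 1 else ℓ' (q - 1)) = m'
      rw [if_neg (by omega : ¬ (q < q)), if_pos rfl]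
      omega
    · obtain ⟨i, hi'⟩ := hsur m' hkm' (by omega)
      have hi : ℓ' (i : ℕ) = m' := hi'
      by_cases h1 : (i:ℕ) < q
      · exact ⟨⟨(i:ℕ), by omega⟩, by simp only [if_pos h1]; exact hi⟩
      · refine ⟨⟨(i:ℕ) + 1, by omega⟩, ?_⟩
        have h2 : ¬ ((i:ℕ) + 1 < q) := by omega
        have h3 : ¬ ((i:ℕ) + 1 = q) := by omega
        have h4 : (i:ℕ) + 1 - 1 = (i:ℕ) := by omega
        simp only [if_neg h2, if_neg h3, h4]
        exact hi

end ChainInsert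
section Corollaries

variable {p k : ℕ}

lemma chain_merge_eq {c : ℕ → NCPart (p+2)} {ℓ : ℕ → ℕ} (hc : IsPFChain (p+1) k c ℓ)
    {t : ℕ} (htp : t ≤ p) (ht : ℓ t = p+1) : delTop (c t) = delTop (c (t+1)) := by
  refine merge_delTop_eq (m := p+1) ?_
  have := hc.2.2.1 t (by omega)
  rwa [ht] at this

lemma mem_delTop (hk2 : 2 ≤ k) (hkp : k ≤ p) {π : NCPart (p+2)}
    (h : InPosetPF (p+1) k π) : InPosetPF p k (delTop π) := by
  obtain ⟨c, ℓ, hc, i, hip, hci⟩ := h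
  obtain ⟨t, htp, ht, huniq, hsing, hjoin⟩ := chain_struct hc hk2 hkp
  have hc' := chain_delete hc hk2 hkp htp ht huniq hsing hjoin
  by_cases h1 : i < t
  · exact ⟨_, _, hc', i, by omega, by simp only [if_pos h1]; rw [hci]⟩
  · by_cases h2 : i = t
    · refine ⟨_, _, hc', t, by omega, ?_⟩
      simp only [if_neg (lt_irrefl t)]
      rw [← chain_merge_eq hc htp ht, ← h2, hci]
    · refine ⟨_, _, hc', i - 1, by omega, ?_⟩
      simp only [if_neg (show ¬ (i - 1 < t) by omega)]
      rw [show i - 1 + 1 = i by omega, hci]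

lemma good_split (hk2 : 2 ≤ k) (hkp : k ≤ p) {π : NCPart (p+2)}
    (h : InPosetPF (p+1) k π) :
    π.1.r (p+1) (p+2) ∨ (∀ x, π.1.r (p+2) x → x = p+2) := by
  obtain ⟨c, ℓ, hc, i, hip, hci⟩ := h
  obtain ⟨t, htp, ht, huniq, hsing, hjoin⟩ := chain_struct hc hk2 hkp
  subst hci
  by_cases h1 : i ≤ t
  · exact Or.inr (hsing i h1)
  · exact Or.inl (hjoin i (by omega) (by omega))

lemma sing_not_rel {p : ℕ} {π : NCPart (p+2)} (hs : ∀ x, π.1.r (p+2) x → x = p+2) :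
    ¬ π.1.r (p+1) (p+2) := by
  intro hr
  have := hs (p+1) (π.1.iseqv.symm hr)
  omega

lemma fwd_cover (hk2 : 2 ≤ k) (hkp : k ≤ p) {σ τ : NCPart (p+2)}
    (h : PFCover (p+1) k σ τ) :
    (delTop σ = delTop τ ∧ ¬ σ.1.r (p+1) (p+2) ∧ τ.1.r (p+1) (p+2)) ∨
    (PFCover p k (delTop σ) (delTop τ) ∧ (σ.1.r (p+1) (p+2) ↔ τ.1.r (p+1) (p+2))) := by
  obtain ⟨c, ℓ, hc, i, hip, hci, hci1⟩ := h
  obtain ⟨t, htp, ht, huniq, hsing, hjoin⟩ := chain_struct hc hk2 hkp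
  have hc' := chain_delete hc hk2 hkp htp ht huniq hsing hjoin
  have hns : ∀ j ≤ t, ¬ (c j).1.r (p+1) (p+2) := fun j hj => sing_not_rel (hsing j hj)
  by_cases h2 : i = t
  · subst h2
    left
    refine ⟨?_, ?_, ?_⟩
    · rw [← hci, ← hci1]
      exact chain_merge_eq hc (by omega) ht
    · rw [← hci]
      exact hns i le_rfl
    · rw [← hci1]
      exact hjoin (i+1) (by omega) (by omega)
  · by_cases h1 : i < t
    · right
      constructor
      · refine ⟨_, _, hc', i, by omega, ?_, ?_⟩
        · simp only [if_pos h1]; rw [hci]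
        · by_cases h3 : i + 1 < t
          · simp only [if_pos h3]; rw [hci1]
          · have h4 : i + 1 = t := by omega
            simp only [if_neg h3]
            rw [show i + 1 + 1 = t + 1 by omega, ← chain_merge_eq hc htp ht, ← h4, hci1]
      · rw [← hci, ← hci1]
        exact iff_of_false (hns i (by omega)) (hns (i+1) (by omega))
    · right
      constructor
      · refine ⟨_, _, hc', i - 1, by omega, ?_, ?_⟩
        · simp only [if_neg (show ¬ (i - 1 < t) by omega)]
          rw [show i - 1 + 1 = i by omega, hci]
        · simp only [if_neg (show ¬ (i - 1 + 1 < t) by omega)]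
          rw [show i - 1 + 1 + 1 = i + 1 by omega, hci1]
      · rw [← hci, ← hci1]
        exact iff_of_true (hjoin i (by omega) (by omega)) (hjoin (i+1) (by omega) (by omega))

lemma mem_ext0 (hk2 : 2 ≤ k) (hkp : k ≤ p) {π' : NCPart (p+1)}
    (h : InPosetPF p k π') : InPosetPF (p+1) k (ext0 π') := by
  obtain ⟨c', ℓ', hc', j, hjp, hcj⟩ := h
  have hc := chain_insert hc' hk2 hkp (q := p) le_rfl
  refine ⟨_, _, hc, j, by omega, ?_⟩
  simp only [if_pos (show j ≤ p from hjp)]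
  exact congrArg _ hcj

lemma mem_ext1 (hk2 : 2 ≤ k) (hkp : k ≤ p) {π' : NCPart (p+1)}
    (h : InPosetPF p k π') (hm : 1 ≤ p + 1) : InPosetPF (p+1) k (ext1 hm π') := by
  obtain ⟨c', ℓ', hc', j, hjp, hcj⟩ := h
  have hc := chain_insert hc' hk2 hkp (q := 0) (Nat.zero_le p)
  refine ⟨_, _, hc, j + 1, by omega, ?_⟩
  simp only [if_neg (show ¬ (j + 1 ≤ 0) by omega)]
  rw [show j + 1 - 1 = j by omega]
  exact congrArg _ hcj

lemma bwd_cover0 (hk2 : 2 ≤ k) (hkp : k ≤ p) {σ' τ' : NCPart (p+1)}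
    (h : PFCover p k σ' τ') : PFCover (p+1) k (ext0 σ') (ext0 τ') := by
  obtain ⟨c', ℓ', hc', i, hi, hci, hci1⟩ := h
  have hc := chain_insert hc' hk2 hkp (q := p) le_rfl
  refine ⟨_, _, hc, i, by omega, ?_, ?_⟩
  · simp only [if_pos (show i ≤ p by omega)]
    exact congrArg _ hci
  · simp only [if_pos (show i + 1 ≤ p by omega)]
    exact congrArg _ hci1

lemma bwd_cover1 (hk2 : 2 ≤ k) (hkp : k ≤ p) {σ' τ' : NCPart (p+1)}
    (h : PFCover p k σ' τ') (hm : 1 ≤ p + 1) :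
    PFCover (p+1) k (ext1 hm σ') (ext1 hm τ') := by
  obtain ⟨c', ℓ', hc', i, hi, hci, hci1⟩ := h
  have hc := chain_insert hc' hk2 hkp (q := 0) (Nat.zero_le p)
  refine ⟨_, _, hc, i + 1, by omega, ?_, ?_⟩
  · simp only [if_neg (show ¬ (i + 1 ≤ 0) by omega)]
    rw [show i + 1 - 1 = i by omega]
    exact congrArg _ hci
  · simp only [if_neg (show ¬ (i + 1 + 1 ≤ 0) by omega)]
    rw [show i + 1 + 1 - 1 = i + 1 by omega]
    exact congrArg _ hci1

lemma bwd_mixed (hk2 : 2 ≤ k) (hkp : k ≤ p) {π' : NCPart (p+1)}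
    (h : InPosetPF p k π') (hm : 1 ≤ p + 1) :
    PFCover (p+1) k (ext0 π') (ext1 hm π') := by
  obtain ⟨c', ℓ', hc', j, hjp, hcj⟩ := h
  have hc := chain_insert hc' hk2 hkp (q := j) hjp
  refine ⟨_, _, hc, j, by omega, ?_, ?_⟩
  · simp only [if_pos (le_refl j)]
    exact congrArg _ hcj
  · simp only [if_neg (show ¬ (j + 1 ≤ j) by omega)]
    rw [show j + 1 - 1 = j by omega]
    exact congrArg _ hcj

end Corollaries
section Final

open Relation

variable {p k : ℕ}

lemma fwd_RTG (hk2 : 2 ≤ k) (hkp : k ≤ p) {σ τ : NCPart (p+2)}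
    (h : Relation.ReflTransGen (PFCover (p+1) k) σ τ) :
    Relation.ReflTransGen (PFCover p k) (delTop σ) (delTop τ) ∧
      (σ.1.r (p+1) (p+2) → τ.1.r (p+1) (p+2)) := by
  induction h with
  | refl => exact ⟨Relation.ReflTransGen.refl, id⟩
  | tail _ hlast ih =>
    rcases fwd_cover hk2 hkp hlast with ⟨heq, _, hb⟩ | ⟨hcov, hiff⟩
    · exact ⟨heq ▸ ih.1, fun _ => hb⟩
    · exact ⟨ih.1.tail hcov, fun h' => hiff.1 (ih.2 h')⟩

open Classical in
noncomputable def theIso (p k : ℕ) (hk2 : 2 ≤ k) (hkp : k ≤ p) :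
    PFPoset (p+1) k ≃o (PFPoset p k × Fin 2) := by
  have hm : 1 ≤ p + 1 := by omega
  refine
    { toFun := fun σ => (⟨delTop σ.1, mem_delTop hk2 hkp σ.2⟩,
        if σ.1.1.r (p+1) (p+2) then (1 : Fin 2) else 0),
      invFun := fun x => if h : (x.2 : ℕ) = 0 then ⟨ext0 x.1.1, mem_ext0 hk2 hkp x.1.2⟩
        else ⟨ext1 hm x.1.1, mem_ext1 hk2 hkp x.1.2 hm⟩,
      left_inv := ?_, right_inv := ?_, map_rel_iff' := ?_ }
  · intro σ
    by_cases hr : σ.1.1.r (p+1) (p+2)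
    · simp only [if_pos hr]
      exact (dif_neg (by split_ifs <;> simp_all)).trans (Subtype.ext (ext1_delTop hm σ.1 hr))
    · simp only [if_neg hr]
      refine (dif_pos (by split_ifs <;> simp_all)).trans (Subtype.ext (ext0_delTop σ.1 ?_))
      rcases good_split hk2 hkp σ.2 with h | h
      · exact absurd h hr
      · exact h
  · rintro ⟨π', ε⟩
    dsimp only
    by_cases hε : (ε : ℕ) = 0
    · have hε' : ε = 0 := Fin.ext (by simpa using hε)
      erw [dif_pos hε]
      refine Prod.ext ?_ ?_
      · exact Subtype.ext (delTop_ext0 π'.1)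
      · simp only [if_neg (ext0_not_rel hm π'.1)]
        exact hε'.symm
    · have hε' : ε = 1 := Fin.ext (by have := ε.isLt; simp only [Fin.val_one]; omega)
      erw [dif_neg hε]
      refine Prod.ext ?_ ?_
      · exact Subtype.ext (delTop_ext1 hm π'.1)
      · simp only [if_pos (ext1_rel hm π'.1)]
        exact hε'.symm
  · intro σ τ
    simp only [Equiv.coe_fn_mk, Prod.mk_le_mk]
    constructor
    · rintro ⟨h1, h2⟩
      have h1' : Relation.ReflTransGen (PFCover p k) (delTop σ.1) (delTop τ.1) := h1
      show Relation.ReflTransGen (PFCover (p+1) k) σ.1 τ.1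
      have hσ0 : ¬ σ.1.1.r (p+1) (p+2) → ext0 (delTop σ.1) = σ.1 := by
        intro hr
        refine ext0_delTop σ.1 ?_
        rcases good_split hk2 hkp σ.2 with h | h
        · exact absurd h hr
        · exact h
      have hτ0 : ¬ τ.1.1.r (p+1) (p+2) → ext0 (delTop τ.1) = τ.1 := by
        intro hr
        refine ext0_delTop τ.1 ?_
        rcases good_split hk2 hkp τ.2 with h | h
        · exact absurd h hr
        · exact h
      by_cases hrσ : σ.1.1.r (p+1) (p+2) <;> by_cases hrτ : τ.1.1.r (p+1) (p+2)
      · have hl : Relation.ReflTransGen (PFCover (p+1) k) (ext1 hm (delTop σ.1)) (ext1 hm (delTop τ.1)) := Relation.ReflTransGen.lift (ext1 hm)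
          (fun a b hab => bwd_cover1 hk2 hkp hab hm) _ _ h1'
        rwa [ext1_delTop hm σ.1 hrσ, ext1_delTop hm τ.1 hrτ] at hl
      · exfalso
        rw [if_pos hrσ, if_neg hrτ] at h2
        exact absurd h2 (by show ¬ ((1 : Fin 2) ≤ 0); decide)
      · have hl := Relation.ReflTransGen.lift ext0
          (fun a b hab => bwd_cover0 hk2 hkp hab) _ _ h1'
        have hmix : PFCover (p+1) k (ext0 (delTop τ.1)) (ext1 hm (delTop τ.1)) :=
          bwd_mixed hk2 hkp (mem_delTop hk2 hkp τ.2) hm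
        have hl2 := hl.tail hmix
        rwa [hσ0 hrσ, ext1_delTop hm τ.1 hrτ] at hl2
      · have hl : Relation.ReflTransGen (PFCover (p+1) k) (ext0 (delTop σ.1)) (ext0 (delTop τ.1)) := Relation.ReflTransGen.lift ext0
          (fun a b hab => bwd_cover0 hk2 hkp hab) _ _ h1'
        rwa [hσ0 hrσ, hτ0 hrτ] at hl
    · intro h
      have hf := fwd_RTG hk2 hkp h
      refine ⟨hf.1, ?_⟩
      by_cases hrσ : σ.1.1.r (p+1) (p+2)
      · rw [if_pos hrσ, if_pos (hf.2 hrσ)]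
      · rw [if_neg hrσ]
        exact Fin.zero_le _

end Final

/-- For all integers `n > k ≥ 2`, the poset `Poset(PF_{n,k})` is order-isomorphic to the
direct product of `Poset(PF_{n-1,k})` with a two-element chain. -/
theorem posetPF_iso_prod_twoChain (n k : ℕ) (h2 : 2 ≤ k) (hkn : k < n) :
    Nonempty (PFPoset n k ≃o (PFPoset (n - 1) k × Fin 2)) := by
  obtain ⟨p, rfl⟩ : ∃ p, n = p + 1 := ⟨n - 1, by omega⟩
  have hkp : k ≤ p := by omega
  rw [show p + 1 - 1 = p by omega]
  exact ⟨theIso p k h2 hkp⟩
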